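/- Let H ⊆ K be Hilbert spaces of the same orthogonal dimension, R ∈ B(K), and T ∈ B(H) with T ⊆ R (R extends T). Then there exists a net {T_τ} in B(H), indexed by the finite-dimensional subspaces of H ordered by inclusion, of operators each unitarily equivalent to R, converging strongly to T. -/

import Mathlib

open ContinuousLinearMap Filter
open scoped ComplexInnerProductSpace

set_option linter.unusedSectionVars false

/-- The covariance of a bounded operator `T` on a complex Hilbert space:
`cov T = √‖T*T − I‖`. -/
noncomputable def cov {H : Type*} [NormedAddCommGroup H] [InnerProductSpace ℂ H]
    [CompleteSpace H] (T : H →L[ℂ] H) : ℝ :=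
  Real.sqrt ‖adjoint T ∘L T - 1‖

section Extend

variable {E : Type*} [NormedAddCommGroup E] [InnerProductSpace ℂ E] [CompleteSpace E]
variable (F : Submodule ℂ E) [CompleteSpace F]

noncomputable def auxMap (h : F →ₗ[ℂ] F) : E →ₗ[ℂ] E :=
  F.subtype ∘ₗ h ∘ₗ (F.orthogonalProjectionOnto).toLinearMap +
    (LinearMap.id - F.subtype ∘ₗ (F.orthogonalProjectionOnto).toLinearMap)

theorem auxMap_apply (h : F →ₗ[ℂ] F) (x : E) :
    auxMap F h x = ↑(h (F.orthogonalProjectionOnto x)) + (x - ↑(F.orthogonalProjectionOnto x)) := rfl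

theorem proj_auxMap (h : F →ₗ[ℂ] F) (x : E) :
    F.orthogonalProjectionOnto (auxMap F h x) = h (F.orthogonalProjectionOnto x) := by
  rw [auxMap_apply, map_add, Submodule.orthogonalProjectionOnto_mem_subspace_eq_self,
    Submodule.orthogonalProjectionOnto_apply_of_mem_orthogonal (v := x - ↑(F.orthogonalProjectionOnto x))
      (F.sub_starProjection_mem_orthogonal x), add_zero]

theorem auxMap_auxMap (h h' : F →ₗ[ℂ] F) (hh : ∀ v, h' (h v) = v) (x : E) :
    auxMap F h' (auxMap F h x) = x := by
  rw [auxMap_apply, proj_auxMap, hh, auxMap_apply]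
  abel

theorem norm_auxMap (g : F ≃ₗᵢ[ℂ] F) (x : E) :
    ‖auxMap F g.toLinearEquiv.toLinearMap x‖ = ‖x‖ := by
  set p := F.orthogonalProjectionOnto x with hp
  have hgp : g.toLinearEquiv.toLinearMap p = g p := rfl
  have horth : (inner ℂ (↑(g.toLinearEquiv.toLinearMap p) : E) (x - ↑p) : ℂ) = 0 :=
    Submodule.inner_right_of_mem_orthogonal (Submodule.coe_mem _)
      (F.sub_starProjection_mem_orthogonal x)
  have h0 : (inner ℂ (↑p : E) (x - ↑p) : ℂ) = 0 :=
    Submodule.inner_right_of_mem_orthogonal (Submodule.coe_mem _)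
      (F.sub_starProjection_mem_orthogonal x)
  have hx2 := norm_add_sq_eq_norm_sq_add_norm_sq_of_inner_eq_zero _ _ h0
  have hxx : (↑p : E) + (x - ↑p) = x := by abel
  rw [hxx] at hx2
  have hnorm : ‖(↑(g.toLinearEquiv.toLinearMap p) : E)‖ = ‖(↑p : E)‖ := by
    rw [hgp, Submodule.norm_coe, g.norm_map, Submodule.norm_coe]
  rw [auxMap_apply, ← sq_eq_sq₀ (norm_nonneg _) (norm_nonneg _), sq, sq,
    norm_add_sq_eq_norm_sq_add_norm_sq_of_inner_eq_zero _ _ horth, hnorm, hx2]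

noncomputable def extendByIdentity (g : F ≃ₗᵢ[ℂ] F) : E ≃ₗᵢ[ℂ] E where
  toLinearEquiv := LinearEquiv.ofLinear (auxMap F g.toLinearEquiv.toLinearMap)
    (auxMap F g.symm.toLinearEquiv.toLinearMap)
    (LinearMap.ext fun x => auxMap_auxMap F _ _ (fun v => g.apply_symm_apply v) x)
    (LinearMap.ext fun x => auxMap_auxMap F _ _ (fun v => g.symm_apply_apply v) x)
  norm_map' := norm_auxMap F g

theorem extendByIdentity_apply_of_mem (g : F ≃ₗᵢ[ℂ] F) {v : E} (hv : v ∈ F) :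
    extendByIdentity F g v = ↑(g ⟨v, hv⟩) := by
  have hP : F.orthogonalProjectionOnto v = ⟨v, hv⟩ :=
    Subtype.ext (Submodule.starProjection_eq_self_iff.mpr hv)
  show auxMap F g.toLinearEquiv.toLinearMap v = _
  rw [auxMap_apply, hP]
  simp

end Extend

section Main

variable {K : Type*} [NormedAddCommGroup K] [InnerProductSpace ℂ K] [CompleteSpace K]
variable (Hs : Submodule ℂ K) [CompleteSpace Hs]

/-- Given a finite-dimensional subspace `σ` of `Hs` and a unitary `E : Hs ≃ K`,
there is a unitary `U : Hs ≃ K` fixing `σ` pointwise. -/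
theorem exists_unitary_fixing (E : Hs ≃ₗᵢ[ℂ] K) (σ : Submodule ℂ Hs)
    [FiniteDimensional ℂ σ] :
    ∃ U : Hs ≃ₗᵢ[ℂ] K, ∀ x : Hs, x ∈ σ → U x = (x : K) := by
  classical
  set A : Submodule ℂ K := σ.map (E.toLinearEquiv : Hs →ₗ[ℂ] K) with hA
  set σ' : Submodule ℂ K := σ.map Hs.subtype with hσ'
  haveI : FiniteDimensional ℂ A := by
    apply Module.Finite.map
  haveI : FiniteDimensional ℂ σ' := by
    apply Module.Finite.map
  set F : Submodule ℂ K := A ⊔ σ' with hF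
  haveI : FiniteDimensional ℂ F := inferInstance
  haveI : CompleteSpace F := FiniteDimensional.complete ℂ F
  have hAF : A ≤ F := le_sup_left
  have hσ'F : σ' ≤ F := le_sup_right
  set S : Submodule ℂ F := A.comap F.subtype with hS
  -- the isometry S →ₗᵢ F sending E y (for y ∈ σ) to ↑y
  have hmem : ∀ s : S, (Hs.subtype ∘ₗ (E.symm.toLinearEquiv : K →ₗ[ℂ] Hs) ∘ₗ
      F.subtype ∘ₗ S.subtype) s ∈ F := by
    intro s
    have hsA : (↑(↑s : F) : K) ∈ A := s.2
    obtain ⟨y, hy, hEy⟩ := hsA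
    apply hσ'F
    refine ⟨E.symm (↑(↑s : F) : K), ?_, rfl⟩
    have : E.symm ((↑(↑s : F) : K)) = y := by
      rw [← hEy]; exact E.symm_apply_apply y
    rw [this]; exact hy
  set L : S →ₗᵢ[ℂ] F :=
    { toLinearMap := LinearMap.codRestrict F _ hmem
      norm_map' := by
        intro s
        calc ‖LinearMap.codRestrict F _ hmem s‖
            = ‖(↑(LinearMap.codRestrict F _ hmem s) : K)‖ := (Submodule.norm_coe _).symm
          _ = ‖(↑(E.symm (↑(↑s : F) : K)) : K)‖ := rfl
          _ = ‖s‖ := by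
              rw [Submodule.norm_coe, E.symm.norm_map, Submodule.norm_coe,
                Submodule.norm_coe] } with hL
  set g0 : F →ₗᵢ[ℂ] F := L.extend with hg0
  have hg0surj : Function.Surjective g0 := by
    have := (LinearMap.injective_iff_surjective (f := g0.toLinearMap)).mp g0.injective
    exact this
  set g : F ≃ₗᵢ[ℂ] F := LinearIsometryEquiv.ofSurjective g0 hg0surj with hg
  refine ⟨E.trans (extendByIdentity F g), ?_⟩
  intro x hx
  have hxF : E x ∈ F := hAF ⟨x, hx, rfl⟩
  have step1 : (E.trans (extendByIdentity F g)) x = extendByIdentity F g (E x) := rfl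
  rw [step1, extendByIdentity_apply_of_mem F g hxF]
  have hsS : (⟨E x, hxF⟩ : F) ∈ S := by
    show (E x : K) ∈ A
    exact ⟨x, hx, rfl⟩
  have hgs : g ⟨E x, hxF⟩ = g0 ⟨E x, hxF⟩ := by
    rw [hg, LinearIsometryEquiv.coe_ofSurjective]
  rw [hgs]
  have : (⟨E x, hxF⟩ : F) = ((⟨⟨E x, hxF⟩, hsS⟩ : S) : F) := rfl
  rw [this, LinearIsometry.extend_apply]
  show (↑(L ⟨⟨E x, hxF⟩, hsS⟩) : K) = (x : K)
  show (↑(E.symm (E x)) : K) = (x : K)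
  rw [E.symm_apply_apply]

end Main

/-- Bishop-type approximation: if T on a closed subspace Hs of K (with dim Hs = dim K)
extends to R on K, then there is a net, indexed by the finite-dimensional subspaces of Hs
ordered by inclusion, of operators unitarily equivalent to R converging strongly to T. -/
theorem net_unitarily_equivalent_strong_limit {K : Type*} [NormedAddCommGroup K]
    [InnerProductSpace ℂ K] [CompleteSpace K]
    (Hs : Submodule ℂ K) [CompleteSpace Hs]
    (hdim : Nonempty (Hs ≃ₗᵢ[ℂ] K))
    (R : K →L[ℂ] K) (T : Hs →L[ℂ] Hs)
    (hext : ∀ x : Hs, (T x : K) = R x) :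
    ∃ Tnet : {p : Submodule ℂ Hs // FiniteDimensional ℂ p} → (Hs →L[ℂ] Hs),
      (∀ τ, ∃ U : Hs ≃ₗᵢ[ℂ] K, ∀ x : Hs, Tnet τ x = U.symm (R (U x))) ∧
      ∀ x : Hs, Filter.Tendsto (fun τ => Tnet τ x) Filter.atTop (nhds (T x)) := by
  classical
  obtain ⟨E⟩ := hdim
  set σf : {p : Submodule ℂ Hs // FiniteDimensional ℂ p} → Submodule ℂ Hs :=
    fun τ => (τ : Submodule ℂ Hs) ⊔ (τ : Submodule ℂ Hs).map (T : Hs →ₗ[ℂ] Hs) with hσf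
  have key : ∀ τ, ∃ U : Hs ≃ₗᵢ[ℂ] K, ∀ x : Hs, x ∈ σf τ → U x = (x : K) := by
    intro τ
    haveI := τ.2
    exact exists_unitary_fixing Hs E (σf τ)
  choose U hU using key
  refine ⟨fun τ => ((U τ).symm.toContinuousLinearEquiv.toContinuousLinearMap.comp
      (R.comp (U τ).toContinuousLinearEquiv.toContinuousLinearMap)),
    fun τ => ⟨U τ, fun x => rfl⟩, ?_⟩
  intro x
  have hev : ∀ᶠ τ in (atTop : Filter {p : Submodule ℂ Hs // FiniteDimensional ℂ p}),
      ((U τ).symm.toContinuousLinearEquiv.toContinuousLinearMap.comp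
      (R.comp (U τ).toContinuousLinearEquiv.toContinuousLinearMap)) x = T x := by
    apply Filter.mem_of_superset
      (Filter.mem_atTop (⟨Submodule.span ℂ {x}, inferInstance⟩ :
        {p : Submodule ℂ Hs // FiniteDimensional ℂ p}))
    intro τ hτ
    have hxτ : x ∈ (τ : Submodule ℂ Hs) :=
      (Submodule.span_singleton_le_iff_mem x _).mp hτ
    have hx1 : x ∈ σf τ := le_sup_left (a := (τ : Submodule ℂ Hs)) hxτ
    have hx2 : T x ∈ σf τ :=
      le_sup_right (b := (τ : Submodule ℂ Hs).map (T : Hs →ₗ[ℂ] Hs))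
        (Submodule.mem_map_of_mem hxτ)
    show (U τ).symm (R ((U τ) x)) = T x
    have h1 : R ((U τ) x) = ((T x : Hs) : K) := by
      rw [hU τ x hx1]; exact (hext x).symm
    rw [h1, ← hU τ (T x) hx2, (U τ).symm_apply_apply]
  have heq : (fun τ => T x) =ᶠ[atTop]
      (fun τ => ((U τ).symm.toContinuousLinearEquiv.toContinuousLinearMap.comp
      (R.comp (U τ).toContinuousLinearEquiv.toContinuousLinearMap)) x) :=
    hev.mono fun τ h => h.symm
  exact Filter.Tendsto.congr' heq tendsto_const_nhds
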